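/- For every b > 0 there exists a constant Λ > 0, depending only on b, with the following property: for every R > 0 and every continuous nonnegative function L : [0,R) → ℝ with L(0) = 0 satisfying hypothesis (★_b) on [0,R), and for all τ, s with 0 < 2τ ≤ s and s < R − 3τ, one has ∫_{s−τ}^{s} e^{−br}·L(r) dr ≤ Λ·τ + (Λ/τ)·∫_{s−2τ}^{s−τ} e^{−br}·L(r) dr. -/

import Mathlib

open Real MeasureTheory intervalIntegral Set

/-- Hypothesis (★_b): for all `η, t` with `0 < η ≤ t < R`,
`(3/η²)·∫_{t−η}^{t} e^{−br}·L(r) dr + (7b/η²)·∫_{t−η}^{t} (t−r)·e^{−br}·L(r) dr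
  ≤ 4π + (4/η)·e^{−b(t−η)}·L(t−η)`. -/
def StarHyp (b R : ℝ) (L : ℝ → ℝ) : Prop :=
  ∀ η t : ℝ, 0 < η → η ≤ t → t < R →
    (3 / η ^ 2) * (∫ r in (t - η)..t, Real.exp (-b * r) * L r)
      + (7 * b / η ^ 2) * (∫ r in (t - η)..t, (t - r) * Real.exp (-b * r) * L r)
    ≤ 4 * Real.pi + (4 / η) * Real.exp (-b * (t - η)) * L (t - η)

lemma helper_mono {f : ℝ → ℝ} {a c d e : ℝ} (hac : a ≤ c) (hcd : c ≤ d) (hde : d ≤ e)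
    (hf : ContinuousOn f (Set.Icc a e)) (h0 : ∀ x ∈ Set.Icc a e, 0 ≤ f x) :
    (∫ x in c..d, f x) ≤ ∫ x in a..e, f x := by
  have i1 : IntervalIntegrable f MeasureTheory.volume a c :=
    (hf.mono (by rw [Set.uIcc_of_le hac]
                 exact Set.Icc_subset_Icc le_rfl (hcd.trans hde))).intervalIntegrable
  have i2 : IntervalIntegrable f MeasureTheory.volume c d :=
    (hf.mono (by rw [Set.uIcc_of_le hcd]
                 exact Set.Icc_subset_Icc hac hde)).intervalIntegrable
  have i3 : IntervalIntegrable f MeasureTheory.volume d e :=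
    (hf.mono (by rw [Set.uIcc_of_le hde]
                 exact Set.Icc_subset_Icc (hac.trans hcd) le_rfl)).intervalIntegrable
  have e1 : (∫ x in a..c, f x) + (∫ x in c..d, f x) = ∫ x in a..d, f x :=
    intervalIntegral.integral_add_adjacent_intervals i1 i2
  have e2 : (∫ x in a..d, f x) + (∫ x in d..e, f x) = ∫ x in a..e, f x :=
    intervalIntegral.integral_add_adjacent_intervals (i1.trans i2) i3
  have n1 : 0 ≤ ∫ x in a..c, f x :=
    intervalIntegral.integral_nonneg hac (fun x hx => h0 x ⟨hx.1, hx.2.trans (hcd.trans hde)⟩)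
  have n3 : 0 ≤ ∫ x in d..e, f x :=
    intervalIntegral.integral_nonneg hde (fun x hx => h0 x ⟨(hac.trans hcd).trans hx.1, hx.2⟩)
  linarith

theorem stmt_6 (b : ℝ) (hb : 0 < b) :
    ∃ Λ : ℝ, 0 < Λ ∧
      ∀ (R : ℝ) (L : ℝ → ℝ), 0 < R →
        ContinuousOn L (Set.Ico (0:ℝ) R) →
        (∀ r ∈ Set.Ico (0:ℝ) R, 0 ≤ L r) →
        L 0 = 0 →
        StarHyp b R L →
        ∀ τ s : ℝ, 0 < τ → 2 * τ ≤ s → s < R - 3 * τ →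
          (∫ r in (s - τ)..s, Real.exp (-b * r) * L r)
            ≤ Λ * τ + (Λ / τ) * ∫ r in (s - 2 * τ)..(s - τ), Real.exp (-b * r) * L r := by
  refine ⟨15 / b, by positivity, ?_⟩
  intro R L hR hLc hL0 hLz star τ s hτ h2τ hsR
  have hfc : ContinuousOn (fun r => Real.exp (-b * r) * L r) (Set.Ico 0 R) :=
    ((Real.continuous_exp.comp (continuous_const.mul continuous_id)).continuousOn).mul hLc
  have hf0 : ∀ r ∈ Set.Ico (0:ℝ) R, 0 ≤ Real.exp (-b * r) * L r :=
    fun r hr => mul_nonneg (Real.exp_pos _).le (hL0 r hr)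
  set t := s + 3 * τ with ht_def
  have htR : t < R := by rw [ht_def]; linarith
  have h0s2 : (0:ℝ) ≤ s - 2 * τ := by linarith
  set I₂ := ∫ r in (s - τ)..s, Real.exp (-b * r) * L r with hI2_def
  set I₁ := ∫ r in (s - 2 * τ)..(s - τ), Real.exp (-b * r) * L r with hI1_def
  have hI2nn : 0 ≤ I₂ :=
    intervalIntegral.integral_nonneg (by linarith)
      (fun x hx => hf0 x ⟨by linarith [hx.1], by linarith [hx.2]⟩)
  have hI1nn : 0 ≤ I₁ :=
    intervalIntegral.integral_nonneg (by linarith)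
      (fun x hx => hf0 x ⟨by linarith [hx.1], by linarith [hx.2]⟩)
  -- key pointwise estimate
  have key : ∀ u ∈ Set.Icc (s - 2 * τ) (s - τ),
      ((3 + 21 * b * τ) * I₂ - 100 * Real.pi * τ ^ 2) / (20 * τ)
        ≤ Real.exp (-b * u) * L u := by
    intro u hu
    have hu0 : (0:ℝ) ≤ u := le_trans h0s2 hu.1
    set η := t - u with hη_def
    have hη1 : 4 * τ ≤ η := by rw [hη_def, ht_def]; linarith [hu.2]
    have hη2 : η ≤ 5 * τ := by rw [hη_def, ht_def]; linarith [hu.1]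
    have hηpos : 0 < η := by linarith
    have hηt : η ≤ t := by rw [hη_def]; linarith
    have hstar := star η t hηpos hηt htR
    rw [show t - η = u by rw [hη_def]; ring] at hstar
    have hIccut : Set.Icc u t ⊆ Set.Ico 0 R :=
      fun x hx => ⟨le_trans hu0 hx.1, lt_of_le_of_lt hx.2 htR⟩
    have hfcut : ContinuousOn (fun r => Real.exp (-b * r) * L r) (Set.Icc u t) :=
      hfc.mono hIccut
    have hust : u ≤ s - τ := hu.2
    have hst : s - τ ≤ s := by linarith
    have hsts : s ≤ t := by rw [ht_def]; linarith
    have hE : I₂ ≤ ∫ r in u..t, Real.exp (-b * r) * L r :=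
      helper_mono hust hst hsts hfcut (fun x hx => hf0 x (hIccut hx))
    have hgc : ContinuousOn (fun r => (t - r) * Real.exp (-b * r) * L r) (Set.Icc u t) := by
      exact (((continuous_const.sub continuous_id).continuousOn).mul
        ((Real.continuous_exp.comp (continuous_const.mul continuous_id)).continuousOn)).mul
        (hLc.mono hIccut)
    have hg0 : ∀ x ∈ Set.Icc u t, 0 ≤ (t - x) * Real.exp (-b * x) * L x := by
      intro x hx
      exact mul_nonneg (mul_nonneg (by linarith [hx.2]) (Real.exp_pos _).le)
        (hL0 x (hIccut hx))
    have hJ2a : (∫ r in (s - τ)..s, (t - r) * Real.exp (-b * r) * L r)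
        ≤ ∫ r in u..t, (t - r) * Real.exp (-b * r) * L r :=
      helper_mono hust hst hsts hgc hg0
    have hint1 : IntervalIntegrable (fun r => 3 * τ * (Real.exp (-b * r) * L r))
        MeasureTheory.volume (s - τ) s := by
      apply ContinuousOn.intervalIntegrable
      apply continuousOn_const.mul
      apply hfc.mono
      rw [Set.uIcc_of_le hst]
      exact fun x hx => ⟨by linarith [hx.1], by linarith [hx.2]⟩
    have hint2 : IntervalIntegrable (fun r => (t - r) * Real.exp (-b * r) * L r)
        MeasureTheory.volume (s - τ) s :=
      (hgc.mono (by rw [Set.uIcc_of_le hst]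
                    exact Set.Icc_subset_Icc hust hsts)).intervalIntegrable
    have hJ2b : 3 * τ * I₂ ≤ ∫ r in (s - τ)..s, (t - r) * Real.exp (-b * r) * L r := by
      have hmono := intervalIntegral.integral_mono_on hst hint1 hint2
        (fun x hx => by
          have hfx : 0 ≤ Real.exp (-b * x) * L x :=
            hf0 x ⟨by linarith [hx.1], by linarith [hx.2]⟩
          have htx : 3 * τ ≤ t - x := by rw [ht_def]; linarith [hx.2]
          calc 3 * τ * (Real.exp (-b * x) * L x) ≤ (t - x) * (Real.exp (-b * x) * L x) := by
                exact mul_le_mul_of_nonneg_right htx hfx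
            _ = (t - x) * Real.exp (-b * x) * L x := by ring)
      rw [intervalIntegral.integral_const_mul] at hmono
      exact hmono
    have hF : 3 * τ * I₂ ≤ ∫ r in u..t, (t - r) * Real.exp (-b * r) * L r :=
      le_trans hJ2b hJ2a
    have step1 : (3 / η ^ 2) * I₂ + (7 * b / η ^ 2) * (3 * τ * I₂)
        ≤ 4 * Real.pi + 4 / η * Real.exp (-b * u) * L u := by
      refine le_trans ?_ hstar
      gcongr
    have hη2' : (0:ℝ) < η ^ 2 := by positivity
    have hne : η ≠ 0 := hηpos.ne'
    have h2 : (3 + 21 * b * τ) * I₂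
        ≤ 4 * Real.pi * η ^ 2 + 4 * η * (Real.exp (-b * u) * L u) := by
      have h3 := mul_le_mul_of_nonneg_left step1 hη2'.le
      have e1 : η ^ 2 * ((3 / η ^ 2) * I₂ + (7 * b / η ^ 2) * (3 * τ * I₂))
          = (3 + 21 * b * τ) * I₂ := by field_simp; ring
      have e2 : η ^ 2 * (4 * Real.pi + 4 / η * Real.exp (-b * u) * L u)
          = 4 * Real.pi * η ^ 2 + 4 * η * (Real.exp (-b * u) * L u) := by field_simp
      rw [e1, e2] at h3
      exact h3
    have hfu : 0 ≤ Real.exp (-b * u) * L u :=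
      hf0 u ⟨hu0, by linarith [hu.2]⟩
    rw [div_le_iff₀ (by positivity : (0:ℝ) < 20 * τ)]
    nlinarith [h2, hfu,
      mul_nonneg (mul_nonneg Real.pi_pos.le (by linarith : (0:ℝ) ≤ 5 * τ - η))
        (by linarith : (0:ℝ) ≤ 5 * τ + η),
      mul_nonneg (by linarith : (0:ℝ) ≤ 20 * τ - 4 * η) hfu]
  -- integrate the pointwise estimate
  have hle12 : s - 2 * τ ≤ s - τ := by linarith
  have hintf : IntervalIntegrable (fun r => Real.exp (-b * r) * L r)
      MeasureTheory.volume (s - 2 * τ) (s - τ) := by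
    apply ContinuousOn.intervalIntegrable
    apply hfc.mono
    rw [Set.uIcc_of_le hle12]
    exact fun x hx => ⟨by linarith [hx.1], by linarith [hx.2]⟩
  have hmono := intervalIntegral.integral_mono_on hle12 intervalIntegrable_const hintf key
  rw [intervalIntegral.integral_const, smul_eq_mul,
    show (s - τ) - (s - 2 * τ) = τ by ring] at hmono
  have h4 : ((3 + 21 * b * τ) * I₂ - 100 * Real.pi * τ ^ 2) / 20 ≤ I₁ := by
    have e3 : τ * (((3 + 21 * b * τ) * I₂ - 100 * Real.pi * τ ^ 2) / (20 * τ))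
        = ((3 + 21 * b * τ) * I₂ - 100 * Real.pi * τ ^ 2) / 20 := by
      field_simp
    rw [e3] at hmono
    exact hmono
  have hpi : Real.pi < 3.15 := Real.pi_lt_d2
  have key2 : 21 * b * τ * I₂ ≤ 315 * τ ^ 2 + 315 * I₁ := by
    nlinarith [h4, hI2nn, hI1nn,
      mul_nonneg (by linarith : (0:ℝ) ≤ 3.15 - Real.pi) (sq_nonneg τ)]
  have e4 : (15 / b) * τ + ((15 / b) / τ) * I₁ = (315 * τ ^ 2 + 315 * I₁) / (21 * b * τ) := by
    field_simp
    ring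
  rw [e4, le_div_iff₀ (by positivity : (0:ℝ) < 21 * b * τ)]
  nlinarith [key2]
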